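/- With independent Pareto claims V₁,…,V_d of index α and constants K_j, a random matrix A with entries in [0,1] independent of V, and u₁,…,u_k > 0, it holds that P(F_{i₁} > u₁ t, …, F_{i_k} > u_k t) ~ t^{-α} Σ_{j=1}^d K_j E[(min{A_{i₁ j}/u₁, …, A_{i_k j}/u_k})^α] as t → ∞, whenever the limit constant is positive, where F = AV. -/

import Mathlib

open MeasureTheory ProbabilityTheory Filter Real

lemma scale_tail {g : ℝ → ℝ} {K α : ℝ} (hα : 0 < α)
    (h : Tendsto (fun t : ℝ => t ^ α * g t) atTop (nhds K)) {a : ℝ} (ha : 0 < a) :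
    Tendsto (fun t : ℝ => t ^ α * g (a * t)) atTop (nhds (K / a ^ α)) := by
  have h2 : Tendsto (fun t : ℝ => (a * t) ^ α * g (a * t)) atTop (nhds K) :=
    h.comp (tendsto_id.const_mul_atTop ha)
  have h3 := h2.const_mul ((a : ℝ) ^ α)⁻¹
  have hrw : (fun t : ℝ => (a ^ α)⁻¹ * ((a * t) ^ α * g (a * t))) =ᶠ[atTop]
      fun t => t ^ α * g (a * t) := by
    filter_upwards [eventually_gt_atTop 0] with t ht
    rw [Real.mul_rpow ha.le ht.le]
    field_simp
  have := h3.congr' hrw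
  simpa [div_eq_inv_mul, mul_comm] using this

lemma tail_to_zero {g : ℝ → ℝ} {K α : ℝ} (hα : 0 < α)
    (h : Tendsto (fun t : ℝ => t ^ α * g t) atTop (nhds K)) :
    Tendsto g atTop (nhds 0) := by
  have h2 : Tendsto (fun t : ℝ => t ^ α) atTop atTop := tendsto_rpow_atTop hα
  have h3 := h.div_atTop h2
  have hrw : (fun t : ℝ => t ^ α * g t / t ^ α) =ᶠ[atTop] g := by
    filter_upwards [eventually_gt_atTop 0] with t ht
    have : (t : ℝ) ^ α ≠ 0 := (Real.rpow_pos_of_pos ht α).ne'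
    field_simp
  exact h3.congr' hrw

lemma one_sub_prod_tendsto {ι : Type*} (s : Finset ι) (p : ι → ℝ → ℝ) (l : ι → ℝ) (α : ℝ)
    (hp : ∀ j ∈ s, Tendsto (fun t => t ^ α * p j t) atTop (nhds (l j)))
    (hp0 : ∀ j ∈ s, Tendsto (p j) atTop (nhds 0)) :
    Tendsto (fun t : ℝ => t ^ α * (1 - ∏ j ∈ s, (1 - p j t))) atTop (nhds (∑ j ∈ s, l j)) := by
  classical
  induction s using Finset.induction_on with
  | empty => simpa using tendsto_const_nhds
  | insert a s ha ih =>
    have hQ : Tendsto (fun t => ∏ j ∈ s, (1 - p j t)) atTop (nhds 1) := by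
      have : Tendsto (fun t => ∏ j ∈ s, (1 - p j t)) atTop (nhds (∏ j ∈ s, (1 : ℝ))) :=
        tendsto_finset_prod _ fun j hj => by
          simpa using (tendsto_const_nhds.sub (hp0 j (Finset.mem_insert_of_mem hj)))
      simpa using this
    have h1 := ih (fun j hj => hp j (Finset.mem_insert_of_mem hj))
      (fun j hj => hp0 j (Finset.mem_insert_of_mem hj))
    have h2 : Tendsto (fun t => (t ^ α * p a t) * ∏ j ∈ s, (1 - p j t)) atTop
        (nhds (l a)) := by
      simpa using (hp a (Finset.mem_insert_self a s)).mul hQ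
    have h3 := h1.add h2
    rw [Finset.sum_insert ha]
    have : (fun t : ℝ => t ^ α * (1 - ∏ j ∈ s, (1 - p j t)) + (t ^ α * p a t) * ∏ j ∈ s, (1 - p j t))
        = fun t : ℝ => t ^ α * (1 - ∏ j ∈ insert a s, (1 - p j t)) := by
      funext t
      rw [Finset.prod_insert ha]
      ring
    rw [this] at h3
    convert h3 using 2
    ring

lemma ray_tendsto {Ω : Type*} [MeasurableSpace Ω] (μ : Measure Ω) {k : ℕ} (hk : 0 < k)
    (W : Ω → ℝ) (K α : ℝ) (hα : 0 < α)
    (htail : Tendsto (fun t : ℝ => t ^ α * (μ {ω | t < W ω}).toReal) atTop (nhds K))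
    (b cv : Fin k → ℝ) (hb : ∀ m, 0 < b m) (hc : ∀ m, 0 ≤ cv m) :
    Tendsto (fun t : ℝ => t ^ α * (μ {ω | ∀ m, b m * t < cv m * W ω}).toReal) atTop
      (nhds (K * (⨅ m, cv m / b m) ^ α)) := by
  haveI : Nonempty (Fin k) := ⟨⟨0, hk⟩⟩
  have hbdd : BddBelow (Set.range fun m => cv m / b m) :=
    ⟨0, by rintro x ⟨m, rfl⟩; exact div_nonneg (hc m) (hb m).le⟩
  by_cases hzero : ∃ m, cv m = 0
  · obtain ⟨m0, hm0⟩ := hzero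
    have hinf : (⨅ m, cv m / b m) = 0 := by
      refine le_antisymm ?_ (le_ciInf fun m => div_nonneg (hc m) (hb m).le)
      have := ciInf_le hbdd m0
      simpa [hm0] using this
    rw [hinf, Real.zero_rpow hα.ne', mul_zero]
    have heq : (fun t : ℝ => t ^ α * (μ {ω | ∀ m, b m * t < cv m * W ω}).toReal)
        =ᶠ[atTop] fun _ => 0 := by
      filter_upwards [eventually_gt_atTop 0] with t ht
      have : {ω | ∀ m, b m * t < cv m * W ω} = ∅ := by
        ext ω
        simp only [Set.mem_setOf_eq, Set.mem_empty_iff_false, iff_false, not_forall, not_lt]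
        exact ⟨m0, by simpa [hm0] using (mul_pos (hb m0) ht).le⟩
      simp [this]
    exact tendsto_const_nhds.congr' heq.symm
  · push_neg at hzero
    have hcpos : ∀ m, 0 < cv m := fun m => (hc m).lt_of_ne' (hzero m)
    set S := Finset.univ.sup' Finset.univ_nonempty (fun m => b m / cv m) with hS_def
    obtain ⟨m1, _, hm1⟩ := Finset.exists_mem_eq_sup' Finset.univ_nonempty (fun m => b m / cv m)
    have hS : 0 < S := by rw [hS_def, hm1]; exact div_pos (hb m1) (hcpos m1)
    have hinv : (⨅ m, cv m / b m) = S⁻¹ := by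
      rw [← Finset.inf'_univ_eq_ciInf]
      refine le_antisymm ?_ ?_
      · have h1 : Finset.univ.inf' Finset.univ_nonempty (fun m => cv m / b m) ≤ cv m1 / b m1 :=
          Finset.inf'_le _ (Finset.mem_univ m1)
        rw [hS_def, hm1, inv_div]
        exact h1
      · refine Finset.le_inf' _ _ fun m _ => ?_
        have h2 : b m / cv m ≤ S := by
          rw [hS_def]; exact Finset.le_sup' (fun m => b m / cv m) (Finset.mem_univ m)
        have := inv_anti₀ (div_pos (hb m) (hcpos m)) h2
        rwa [inv_div] at this
    have hset : ∀ t : ℝ, 0 ≤ t →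
        {ω | ∀ m, b m * t < cv m * W ω} = {ω | S * t < W ω} := by
      intro t ht
      ext ω
      simp only [Set.mem_setOf_eq]
      constructor
      · intro h
        rw [hS_def, hm1, div_mul_eq_mul_div, div_lt_iff₀ (hcpos m1)]
        linarith [h m1]
      · intro h m
        have h2 : b m / cv m ≤ S := by
          rw [hS_def]; exact Finset.le_sup' (fun m => b m / cv m) (Finset.mem_univ m)
        have h3 : b m / cv m * t ≤ S * t := mul_le_mul_of_nonneg_right h2 ht
        have h4 : b m / cv m * t < W ω := lt_of_le_of_lt h3 h
        rw [div_mul_eq_mul_div, div_lt_iff₀ (hcpos m)] at h4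
        linarith
    have hmain := scale_tail hα htail hS (g := fun s => (μ {ω | s < W ω}).toReal)
    have heq : (fun t : ℝ => t ^ α * (μ {ω | S * t < W ω}).toReal)
        =ᶠ[atTop] fun t => t ^ α * (μ {ω | ∀ m, b m * t < cv m * W ω}).toReal := by
      filter_upwards [eventually_ge_atTop 0] with t ht
      rw [hset t ht]
    have : K / S ^ α = K * (⨅ m, cv m / b m) ^ α := by
      rw [hinv, Real.inv_rpow hS.le, div_eq_mul_inv]
    rw [← this]
    exact hmain.congr' heq

set_option maxHeartbeats 2000000 in
lemma single_matrix {Ω : Type*} [MeasurableSpace Ω] (μ : Measure Ω) [IsProbabilityMeasure μ]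
    {d k : ℕ} (hk : 0 < k)
    (V : Fin d → Ω → ℝ) (hVmeas : ∀ j, Measurable (V j)) (hVnonneg : ∀ j ω, 0 ≤ V j ω)
    (hVindep : iIndepFun V μ)
    (K : Fin d → ℝ) (α : ℝ) (hK : ∀ j, 0 < K j) (hα : 0 < α)
    (htail : ∀ j, Tendsto (fun t : ℝ => t ^ α * (μ {ω | t < V j ω}).toReal) atTop (nhds (K j)))
    (c : Fin k → Fin d → ℝ) (hc : ∀ m j, c m j ∈ Set.Icc (0:ℝ) 1)
    (u : Fin k → ℝ) (hu : ∀ m, 0 < u m) :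
    Tendsto (fun t : ℝ => t ^ α * (μ {ω | ∀ m, u m * t < ∑ j, c m j * V j ω}).toReal) atTop
      (nhds (∑ j, K j * (⨅ m, c m j / u m) ^ α)) := by
  classical
  haveI : Nonempty (Fin k) := ⟨⟨0, hk⟩⟩
  set Sl := ∑ j, K j * (⨅ m, c m j / u m) ^ α with hSl_def
  set L : Fin d → ℝ := fun j => K j * (⨅ m, c m j / u m) ^ α with hL_def
  have hSlL : Sl = ∑ j, L j := rfl
  have hLnonneg : ∀ j, 0 ≤ L j := fun j =>
    mul_nonneg (hK j).le (Real.rpow_nonneg (le_ciInf fun m => div_nonneg (hc m j).1 (hu m).le) α)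
  have hSlnonneg : 0 ≤ Sl := by
    rw [hSlL]; exact Finset.sum_nonneg fun j _ => hLnonneg j
  set E : ℝ → Set Ω := fun t => {ω | ∀ m, u m * t < ∑ j, c m j * V j ω} with hE_def
  show Tendsto (fun t : ℝ => t ^ α * (μ (E t)).toReal) atTop (nhds Sl)
  set D : Fin d → ℝ → Set Ω := fun j t => {ω | ∀ m, u m * t < c m j * V j ω} with hD_def
  have hDlim : ∀ j, Tendsto (fun t => t ^ α * (μ (D j t)).toReal) atTop (nhds (L j)) := fun j =>
    ray_tendsto μ hk (V j) (K j) α hα (htail j) u (fun m => c m j) hu (fun m => (hc m j).1)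
  have hD0 : ∀ j, Tendsto (fun t => (μ (D j t)).toReal) atTop (nhds 0) :=
    fun j => tail_to_zero hα (hDlim j)
  have hsetmeas : ∀ (j : Fin d) (t : ℝ), MeasurableSet {x : ℝ | ∀ m, u m * t < c m j * x} := by
    intro j t
    have hset : {x : ℝ | ∀ m, u m * t < c m j * x}
        = ⋂ m, (fun x => c m j * x) ⁻¹' Set.Ioi (u m * t) := by
      ext x; simp [Set.mem_iInter, Set.mem_Ioi]
    rw [hset]
    exact MeasurableSet.iInter fun m => (measurable_const_mul _) measurableSet_Ioi
  have hDmeas : ∀ j t, MeasurableSet (D j t) := fun j t => (hVmeas j) (hsetmeas j t)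
  have hDsubE : ∀ j t, D j t ⊆ E t := by
    intro j t ω hω m
    have h2 : c m j * V j ω ≤ ∑ j', c m j' * V j' ω :=
      Finset.single_le_sum (fun j' _ => mul_nonneg (hc m j').1 (hVnonneg j' ω))
        (Finset.mem_univ j)
    exact lt_of_lt_of_le (hω m) h2
  have hUnion : ∀ t : ℝ, (μ (⋃ j, D j t)).toReal = 1 - ∏ j, (1 - (μ (D j t)).toReal) := by
    intro t
    have hprod : μ (⋂ j, (D j t)ᶜ) = ∏ j, μ ((D j t)ᶜ) := by
      have h := (iIndepFun_iff_measure_inter_preimage_eq_mul.mp hVindep) Finset.univ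
        (sets := fun j => {x : ℝ | ∀ m, u m * t < c m j * x}ᶜ)
        (fun j _ => (hsetmeas j t).compl)
      simpa [hD_def, Set.preimage_compl] using h
    have hμU : μ (⋃ j, D j t) = 1 - ∏ j, μ ((D j t)ᶜ) := by
      have h1 : μ ((⋃ j, D j t)ᶜ) = 1 - μ (⋃ j, D j t) :=
        prob_compl_eq_one_sub (MeasurableSet.iUnion fun j => hDmeas j t)
      rw [Set.compl_iUnion, hprod] at h1
      rw [h1, ENNReal.sub_sub_cancel ENNReal.one_ne_top prob_le_one]
    have hprodle : (∏ j, μ ((D j t)ᶜ)) ≤ 1 :=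
      Finset.prod_le_one (fun j _ => zero_le) (fun j _ => prob_le_one)
    rw [hμU, ENNReal.toReal_sub_of_le hprodle ENNReal.one_ne_top, ENNReal.toReal_one,
      ENNReal.toReal_prod]
    congr 1
    refine Finset.prod_congr rfl fun j _ => ?_
    rw [prob_compl_eq_one_sub (hDmeas j t),
      ENNReal.toReal_sub_of_le prob_le_one ENNReal.one_ne_top, ENNReal.toReal_one]
  have hg1 : Tendsto (fun t : ℝ => t ^ α * (1 - ∏ j, (1 - (μ (D j t)).toReal))) atTop
      (nhds Sl) := by
    rw [hSlL]
    exact one_sub_prod_tendsto Finset.univ (fun j t => (μ (D j t)).toReal) L α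
      (fun j _ => hDlim j) (fun j _ => hD0 j)
  have hlow : ∀ᶠ t : ℝ in atTop,
      t ^ α * (1 - ∏ j, (1 - (μ (D j t)).toReal)) ≤ t ^ α * (μ (E t)).toReal := by
    filter_upwards [eventually_gt_atTop 0] with t ht
    rw [← hUnion t]
    refine mul_le_mul_of_nonneg_left ?_ (Real.rpow_nonneg ht.le α)
    exact ENNReal.toReal_mono (measure_ne_top μ _)
      (measure_mono (Set.iUnion_subset fun j => hDsubE j t))
  rw [Metric.tendsto_nhds]
  intro ε hε
  have hlow2 : ∀ᶠ t : ℝ in atTop, Sl - ε < t ^ α * (μ (E t)).toReal := by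
    have h1 := hg1.eventually_const_lt (show Sl - ε < Sl by linarith)
    filter_upwards [h1, hlow] with t ht1 ht2
    linarith
  -- upper bound construction
  set ε' := ε / (2 * (Sl + 1)) with hε'_def
  have hε' : 0 < ε' := div_pos hε (by positivity)
  set γ := (1 + ε') ^ (1 / α) with hγ_def
  have hγpos : 0 < γ := Real.rpow_pos_of_pos (by linarith) _
  have hγ1 : 1 < γ := by
    rw [hγ_def, Real.one_lt_rpow_iff_of_pos (by linarith)]
    exact Or.inl ⟨by linarith, by positivity⟩
  have hγα : γ ^ α = 1 + ε' := by
    rw [hγ_def, ← Real.rpow_mul (by linarith : (0:ℝ) ≤ 1 + ε'),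
      one_div_mul_cancel hα.ne', Real.rpow_one]
  set β := γ⁻¹ with hβ_def
  have hβ0 : 0 < β := inv_pos.mpr hγpos
  have hβ1 : β < 1 := by rw [hβ_def]; exact inv_lt_one_of_one_lt₀ hγ1
  have hβγ : γ * β = 1 := mul_inv_cancel₀ hγpos.ne'
  set u₀ := Finset.univ.inf' Finset.univ_nonempty u with hu₀_def
  have hu₀le : ∀ m, u₀ ≤ u m := fun m => by
    rw [hu₀_def]; exact Finset.inf'_le _ (Finset.mem_univ m)
  have hu₀ : 0 < u₀ := by
    obtain ⟨m2, _, hm2⟩ := Finset.exists_mem_eq_inf' Finset.univ_nonempty u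
    rw [hu₀_def, hm2]; exact hu m2
  set dd := (d : ℝ) + 1 with hdd_def
  have hdd : 0 < dd := by rw [hdd_def]; positivity
  set δ := u₀ * (1 - β) / dd with hδ_def
  have hδ : 0 < δ := by
    rw [hδ_def]; exact div_pos (mul_pos hu₀ (by linarith)) hdd
  have hddδ : dd * δ = u₀ * (1 - β) := by
    rw [hδ_def]; field_simp
  have hb : ∀ m, 0 < u m - dd * δ := by
    intro m; rw [hddδ]; nlinarith [hu₀le m, hβ0, hβ1, hu₀, hu m]
  have hbβ : ∀ m, u m * β ≤ u m - dd * δ := by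
    intro m; rw [hddδ]; nlinarith [hu₀le m, hβ0, hβ1]
  set G : Fin d → ℝ → Set Ω := fun j t => {ω | ∀ m, (u m - dd * δ) * t < c m j * V j ω}
    with hG_def
  have hGlim : ∀ j, Tendsto (fun t => t ^ α * (μ (G j t)).toReal) atTop
      (nhds (K j * (⨅ m, c m j / (u m - dd * δ)) ^ α)) := fun j =>
    ray_tendsto μ hk (V j) (K j) α hα (htail j) (fun m => u m - dd * δ) (fun m => c m j)
      hb (fun m => (hc m j).1)
  have hL' : ∀ j, K j * (⨅ m, c m j / (u m - dd * δ)) ^ α ≤ (1 + ε') * L j := by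
    intro j
    have hpt : ∀ m, c m j / (u m - dd * δ) ≤ γ * (c m j / u m) := by
      intro m
      have h1 : c m j / (u m - dd * δ) ≤ c m j / (u m * β) := by
        gcongr
        exacts [(hc m j).1, mul_pos (hu m) hβ0, hbβ m]
      have h2 : c m j / (u m * β) = γ * (c m j / u m) := by
        rw [hβ_def]
        field_simp
      rw [h2] at h1
      exact h1
    have hmono : (⨅ m, c m j / (u m - dd * δ)) ≤ γ * (⨅ m, c m j / u m) := by
      rw [Real.mul_iInf_of_nonneg hγpos.le]
      exact ciInf_mono ⟨0, by rintro x ⟨m, rfl⟩; exact div_nonneg (hc m j).1 (hb m).le⟩ hpt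
    have hinf0 : (0:ℝ) ≤ ⨅ m, c m j / (u m - dd * δ) :=
      le_ciInf fun m => div_nonneg (hc m j).1 (hb m).le
    have hinfu0 : (0:ℝ) ≤ ⨅ m, c m j / u m :=
      le_ciInf fun m => div_nonneg (hc m j).1 (hu m).le
    have h3 : ((⨅ m, c m j / (u m - dd * δ)) : ℝ) ^ α ≤ (γ * ⨅ m, c m j / u m) ^ α :=
      Real.rpow_le_rpow hinf0 hmono hα.le
    have h4 : (γ * ⨅ m, c m j / u m) ^ α = (1 + ε') * (⨅ m, c m j / u m) ^ α := by
      rw [Real.mul_rpow hγpos.le hinfu0, hγα]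
    calc K j * (⨅ m, c m j / (u m - dd * δ)) ^ α
        ≤ K j * ((1 + ε') * (⨅ m, c m j / u m) ^ α) := by
          apply mul_le_mul_of_nonneg_left _ (hK j).le
          rw [← h4]; exact h3
      _ = (1 + ε') * L j := by rw [hL_def]; ring
  set Pd : Finset (Fin d × Fin d) := Finset.univ.filter (fun pr => pr.1 ≠ pr.2) with hPd_def
  set big : Fin d → ℝ → Set Ω := fun j t => {ω | δ * t < V j ω} with hbig_def
  have hqlim : ∀ j, Tendsto (fun t => t ^ α * (μ (big j t)).toReal) atTop
      (nhds (K j / δ ^ α)) := fun j => scale_tail hα (htail j) hδ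
  have hq0 : ∀ j, Tendsto (fun t => (μ (big j t)).toReal) atTop (nhds 0) :=
    fun j => tail_to_zero hα (hqlim j)
  have hpair : ∀ (j j' : Fin d), j ≠ j' → ∀ t : ℝ,
      μ (big j t ∩ big j' t) = μ (big j t) * μ (big j' t) := by
    intro j j' hne t
    have hind : IndepFun (V j) (V j') μ := hVindep.indepFun hne
    have h := hind.measure_inter_preimage_eq_mul (Set.Ioi (δ * t)) (Set.Ioi (δ * t))
      measurableSet_Ioi measurableSet_Ioi
    simpa [hbig_def, Set.preimage, Set.mem_Ioi] using h
  set Mset : ℝ → Set Ω := fun t => ⋃ pr ∈ Pd, (big pr.1 t ∩ big pr.2 t) with hM_def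
  have hEsub : ∀ t : ℝ, 0 < t → E t ⊆ (⋃ j, G j t) ∪ Mset t := by
    intro t ht ω hω
    by_cases hM : ω ∈ Mset t
    · exact Or.inr hM
    · left
      have hsmall : ∀ j j', j ≠ j' → ¬(δ * t < V j ω ∧ δ * t < V j' ω) := by
        intro j j' hne hcontra
        apply hM
        rw [hM_def]
        have hprmem : ((j, j') : Fin d × Fin d) ∈ Pd := by simp [hPd_def, hne]
        exact Set.mem_biUnion hprmem ⟨hcontra.1, hcontra.2⟩
      by_cases hbig2 : ∃ j0, δ * t < V j0 ω
      · obtain ⟨j0, hj0⟩ := hbig2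
        refine Set.mem_iUnion.mpr ⟨j0, fun m => ?_⟩
        have hothers : ∀ j', j' ≠ j0 → V j' ω ≤ δ * t := by
          intro j' hne
          by_contra hgt; push_neg at hgt
          exact hsmall j' j0 hne ⟨hgt, hj0⟩
        have hcard : ((Finset.univ.erase j0).card : ℝ) ≤ dd := by
          have h5 : (Finset.univ.erase j0).card ≤ d := by
            calc (Finset.univ.erase j0).card ≤ (Finset.univ : Finset (Fin d)).card :=
                  Finset.card_erase_le
              _ = d := by simp
          have h6 : ((Finset.univ.erase j0).card : ℝ) ≤ (d : ℝ) := by exact_mod_cast h5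
          rw [hdd_def]
          linarith
        have hsum : ∑ j ∈ Finset.univ.erase j0, c m j * V j ω ≤ dd * δ * t := by
          calc ∑ j ∈ Finset.univ.erase j0, c m j * V j ω
              ≤ ∑ _j ∈ Finset.univ.erase j0, δ * t := by
                refine Finset.sum_le_sum fun j hj => ?_
                have hne : j ≠ j0 := (Finset.mem_erase.mp hj).1
                have h1 : c m j * V j ω ≤ 1 * V j ω :=
                  mul_le_mul_of_nonneg_right (hc m j).2 (hVnonneg j ω)
                have h2 := hothers j hne
                linarith
            _ = ((Finset.univ.erase j0).card : ℝ) * (δ * t) := by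
                rw [Finset.sum_const, nsmul_eq_mul]
            _ ≤ dd * δ * t := by
                have := mul_pos hδ ht
                nlinarith
        have hEm := hω m
        have hsplit : ∑ j, c m j * V j ω
            = c m j0 * V j0 ω + ∑ j ∈ Finset.univ.erase j0, c m j * V j ω :=
          (Finset.add_sum_erase _ _ (Finset.mem_univ j0)).symm
        have h6 : u m * t < c m j0 * V j0 ω + dd * δ * t := by
          rw [hsplit] at hEm; linarith
        rw [sub_mul]; linarith
      · push_neg at hbig2
        exfalso
        have hEm := hω ⟨0, hk⟩
        have hsum : ∑ j, c (⟨0, hk⟩ : Fin k) j * V j ω ≤ (d : ℝ) * (δ * t) := by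
          calc ∑ j, c (⟨0, hk⟩ : Fin k) j * V j ω ≤ ∑ _j : Fin d, δ * t := by
                refine Finset.sum_le_sum fun j _ => ?_
                have h1 : c (⟨0, hk⟩ : Fin k) j * V j ω ≤ 1 * V j ω :=
                  mul_le_mul_of_nonneg_right (hc _ j).2 (hVnonneg j ω)
                have h2 := hbig2 j
                linarith
            _ = (d : ℝ) * (δ * t) := by simp [Finset.sum_const, nsmul_eq_mul]
        have h1 : (d : ℝ) * (δ * t) ≤ dd * δ * t := by
          rw [hdd_def]; nlinarith [mul_pos hδ ht]
        have h2 : dd * δ * t < u₀ * t := by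
          rw [hddδ]; nlinarith [mul_pos (mul_pos hu₀ hβ0) ht]
        have h3 := hu₀le (⟨0, hk⟩ : Fin k)
        nlinarith
  have hmeasbound : ∀ t : ℝ, 0 < t → (μ (E t)).toReal ≤
      (∑ j, (μ (G j t)).toReal)
        + ∑ pr ∈ Pd, (μ (big pr.1 t)).toReal * (μ (big pr.2 t)).toReal := by
    intro t ht
    have hU : (⋃ j, G j t) = ⋃ j ∈ (Finset.univ : Finset (Fin d)), G j t := by simp
    have h1 : μ (E t) ≤ (∑ j, μ (G j t))
        + ∑ pr ∈ Pd, μ (big pr.1 t) * μ (big pr.2 t) := by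
      calc μ (E t) ≤ μ ((⋃ j, G j t) ∪ Mset t) := measure_mono (hEsub t ht)
        _ ≤ μ (⋃ j, G j t) + μ (Mset t) := measure_union_le _ _
        _ ≤ (∑ j, μ (G j t)) + ∑ pr ∈ Pd, μ (big pr.1 t ∩ big pr.2 t) := by
            refine add_le_add ?_ ?_
            · rw [hU]; exact measure_biUnion_finset_le _ _
            · rw [hM_def]; exact measure_biUnion_finset_le _ _
        _ = (∑ j, μ (G j t)) + ∑ pr ∈ Pd, μ (big pr.1 t) * μ (big pr.2 t) := by
            congr 1
            refine Finset.sum_congr rfl fun pr hpr => ?_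
            have hne : pr.1 ≠ pr.2 := by
              rw [hPd_def] at hpr
              exact (Finset.mem_filter.mp hpr).2
            exact hpair pr.1 pr.2 hne t
    have hfin1 : (∑ j, μ (G j t)) ≠ ⊤ :=
      (ENNReal.sum_lt_top.mpr fun j _ => measure_lt_top μ _).ne
    have hfin2 : (∑ pr ∈ Pd, μ (big pr.1 t) * μ (big pr.2 t)) ≠ ⊤ :=
      (ENNReal.sum_lt_top.mpr fun pr _ =>
        ENNReal.mul_lt_top (measure_lt_top μ _) (measure_lt_top μ _)).ne
    have h2 := ENNReal.toReal_mono (by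
      exact ENNReal.add_ne_top.mpr ⟨hfin1, hfin2⟩) h1
    rw [ENNReal.toReal_add hfin1 hfin2, ENNReal.toReal_sum (fun j _ => measure_ne_top μ _),
      ENNReal.toReal_sum (fun pr _ => (ENNReal.mul_lt_top (measure_lt_top μ _)
        (measure_lt_top μ _)).ne)] at h2
    simpa [ENNReal.toReal_mul] using h2
  set g2 : ℝ → ℝ := fun t => (∑ j, t ^ α * (μ (G j t)).toReal)
      + ∑ pr ∈ Pd, (t ^ α * (μ (big pr.1 t)).toReal) * (μ (big pr.2 t)).toReal with hg2_def
  have hg2lim : Tendsto g2 atTop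
      (nhds ((∑ j, K j * (⨅ m, c m j / (u m - dd * δ)) ^ α)
        + ∑ pr ∈ Pd, (K pr.1 / δ ^ α) * 0)) := by
    apply Tendsto.add
    · exact tendsto_finset_sum _ fun j _ => hGlim j
    · exact tendsto_finset_sum _ fun pr _ => (hqlim pr.1).mul (hq0 pr.2)
  have hl2 : (∑ j, K j * (⨅ m, c m j / (u m - dd * δ)) ^ α)
      + ∑ pr ∈ Pd, (K pr.1 / δ ^ α) * 0 < Sl + ε := by
    have h1 : (∑ j, K j * (⨅ m, c m j / (u m - dd * δ)) ^ α) ≤ (1 + ε') * Sl := by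
      rw [hSlL, Finset.mul_sum]
      exact Finset.sum_le_sum fun j _ => hL' j
    have h2 : ε' * Sl ≤ ε / 2 := by
      rw [hε'_def, div_mul_eq_mul_div, div_le_div_iff₀ (by positivity) (by norm_num)]
      nlinarith
    have h3 : (∑ pr ∈ Pd, (K pr.1 / δ ^ α) * 0) = 0 := by simp
    rw [h3, add_zero]
    nlinarith
  have hup2 : ∀ᶠ t : ℝ in atTop, t ^ α * (μ (E t)).toReal < Sl + ε := by
    filter_upwards [hg2lim.eventually_lt_const hl2, eventually_gt_atTop 0] with t hg2t ht
    have h1 : t ^ α * (μ (E t)).toReal ≤ g2 t := by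
      have h2 := hmeasbound t ht
      have h3 : t ^ α * (μ (E t)).toReal ≤ t ^ α * ((∑ j, (μ (G j t)).toReal)
          + ∑ pr ∈ Pd, (μ (big pr.1 t)).toReal * (μ (big pr.2 t)).toReal) :=
        mul_le_mul_of_nonneg_left h2 (Real.rpow_nonneg ht.le α)
      calc t ^ α * (μ (E t)).toReal ≤ _ := h3
        _ = g2 t := by
            rw [hg2_def]
            rw [mul_add, Finset.mul_sum, Finset.mul_sum]
            congr 1
            refine Finset.sum_congr rfl fun pr _ => by ring
    linarith
  filter_upwards [hlow2, hup2] with t h1 h2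
  rw [Real.dist_eq, abs_sub_lt_iff]
  constructor <;> linarith


set_option maxHeartbeats 1000000 in
/-- Joint marginal exceedances: with independent Pareto claims, a random
matrix `A` with entries in `[0,1]` independent of `V`, distinct agents `i₁,…,i_k` and
positive `u₁,…,u_k`:
`P(F_{i₁} > u₁ t, …, F_{i_k} > u_k t) ~ t^{-α} Σ_j K_j E[(min_m A_{i_m j}/u_m)^α]`,
whenever the limit constant is positive, where `F_i = Σ_j A_{ij} V_j`. -/
theorem stmt_7 {Ω : Type*} [MeasurableSpace Ω] (μ : Measure Ω) [IsProbabilityMeasure μ]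
    (q d : ℕ) (A : Ω → Fin q → Fin d → ℝ)
    (hAmeas : Measurable A) (hAfin : (Set.range A).Finite)
    (hA01 : ∀ ω i j, A ω i j ∈ Set.Icc (0 : ℝ) 1)
    (V : Fin d → Ω → ℝ) (hVmeas : ∀ j, Measurable (V j)) (hVnonneg : ∀ j ω, 0 ≤ V j ω)
    (hVindep : iIndepFun V μ)
    (hAV : IndepFun A (fun ω j => V j ω) μ)
    (K : Fin d → ℝ) (α : ℝ) (hK : ∀ j, 0 < K j) (hα : 0 < α)
    (htail : ∀ j, Tendsto (fun t : ℝ => t ^ α * (μ {ω | t < V j ω}).toReal) atTop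
      (nhds (K j)))
    (k : ℕ) (hk : 0 < k) (idx : Fin k → Fin q) (hidx : Function.Injective idx)
    (u : Fin k → ℝ) (hu : ∀ m, 0 < u m)
    (hpos : 0 < ∑ j, K j * ∫ ω, (⨅ m, A ω (idx m) j / u m) ^ α ∂μ) :
    Tendsto (fun t : ℝ =>
        t ^ α * (μ {ω | ∀ m, u m * t < ∑ j, A ω (idx m) j * V j ω}).toReal) atTop
      (nhds (∑ j, K j * ∫ ω, (⨅ m, A ω (idx m) j / u m) ^ α ∂μ)) := by
  classical
  set R : Finset (Fin q → Fin d → ℝ) := hAfin.toFinset with hR_def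
  have hmemR : ∀ ω, A ω ∈ R := fun ω => by
    rw [hR_def, Set.Finite.mem_toFinset]; exact Set.mem_range_self ω
  have ha01 : ∀ a ∈ R, ∀ i j, a i j ∈ Set.Icc (0:ℝ) 1 := by
    intro a ha i j
    rw [hR_def, Set.Finite.mem_toFinset] at ha
    obtain ⟨ω, rfl⟩ := ha
    exact hA01 ω i j
  set W : Ω → Fin d → ℝ := fun ω j => V j ω with hW_def
  have hWmeas : Measurable W := measurable_pi_lambda _ fun j => hVmeas j
  set Wset : (Fin q → Fin d → ℝ) → ℝ → Set (Fin d → ℝ) :=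
    fun a t => {v | ∀ m, u m * t < ∑ j, a (idx m) j * v j} with hWset_def
  have hWsetmeas : ∀ a t, MeasurableSet (Wset a t) := by
    intro a t
    have hset : Wset a t = ⋂ m, (fun v : Fin d → ℝ => ∑ j, a (idx m) j * v j) ⁻¹'
        Set.Ioi (u m * t) := by
      ext v; simp [hWset_def, Set.mem_iInter, Set.mem_Ioi]
    rw [hset]
    refine MeasurableSet.iInter fun m => ?_
    exact (Finset.measurable_sum Finset.univ fun j _ =>
      (measurable_pi_apply j).const_mul _) measurableSet_Ioi
  -- decomposition of the event
  have hdecomp : ∀ t : ℝ, {ω | ∀ m, u m * t < ∑ j, A ω (idx m) j * V j ω}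
      = ⋃ a ∈ R, (A ⁻¹' {a} ∩ W ⁻¹' (Wset a t)) := by
    intro t
    ext ω
    simp only [Set.mem_setOf_eq, Set.mem_iUnion, Set.mem_inter_iff, Set.mem_preimage,
      Set.mem_singleton_iff]
    constructor
    · intro h
      exact ⟨A ω, hmemR ω, rfl, h⟩
    · rintro ⟨a, _, rfl, h⟩
      exact h
  have hμdecomp : ∀ t : ℝ, μ {ω | ∀ m, u m * t < ∑ j, A ω (idx m) j * V j ω}
      = ∑ a ∈ R, μ (A ⁻¹' {a}) * μ (W ⁻¹' (Wset a t)) := by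
    intro t
    rw [hdecomp t]
    rw [measure_biUnion_finset ?_ ?_]
    · refine Finset.sum_congr rfl fun a ha => ?_
      exact hAV.measure_inter_preimage_eq_mul {a} (Wset a t)
        (MeasurableSet.singleton a) (hWsetmeas a t)
    · intro a _ b _ hab
      refine Set.disjoint_left.mpr fun ω hωa hωb => ?_
      exact hab (hωa.1.symm.trans hωb.1)
    · intro a _
      exact (hAmeas (MeasurableSet.singleton a)).inter (hWmeas (hWsetmeas a t))
  -- per-matrix tendsto
  have hsingle : ∀ a ∈ R, Tendsto
      (fun t : ℝ => t ^ α * (μ (W ⁻¹' (Wset a t))).toReal) atTop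
      (nhds (∑ j, K j * (⨅ m, a (idx m) j / u m) ^ α)) := by
    intro a ha
    have h := single_matrix μ hk V hVmeas hVnonneg hVindep K α hK hα htail
      (fun m j => a (idx m) j) (fun m j => ha01 a ha (idx m) j) u hu
    exact h
  -- combine: t^α * μ(event) = ∑ a, w a * (t^α * μ(W⁻¹ Wset a t))
  have hcomb : ∀ t : ℝ, t ^ α * (μ {ω | ∀ m, u m * t < ∑ j, A ω (idx m) j * V j ω}).toReal
      = ∑ a ∈ R, (μ (A ⁻¹' {a})).toReal * (t ^ α * (μ (W ⁻¹' (Wset a t))).toReal) := by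
    intro t
    rw [hμdecomp t, ENNReal.toReal_sum (fun a _ =>
      (ENNReal.mul_lt_top (measure_lt_top μ _) (measure_lt_top μ _)).ne)]
    rw [Finset.mul_sum]
    refine Finset.sum_congr rfl fun a _ => ?_
    rw [ENNReal.toReal_mul]
    ring
  have hlim : Tendsto
      (fun t : ℝ => ∑ a ∈ R, (μ (A ⁻¹' {a})).toReal * (t ^ α * (μ (W ⁻¹' (Wset a t))).toReal))
      atTop
      (nhds (∑ a ∈ R, (μ (A ⁻¹' {a})).toReal * ∑ j, K j * (⨅ m, a (idx m) j / u m) ^ α)) :=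
    tendsto_finset_sum _ fun a ha => ((hsingle a ha).const_mul _)
  -- identify constant with the integral
  have hint : ∀ j : Fin d, (∫ ω, (⨅ m, A ω (idx m) j / u m) ^ α ∂μ)
      = ∑ a ∈ R, (μ (A ⁻¹' {a})).toReal * (⨅ m, a (idx m) j / u m) ^ α := by
    intro j
    have hfun : (fun ω => (⨅ m, A ω (idx m) j / u m) ^ α)
        = fun ω => ∑ a ∈ R, (A ⁻¹' {a}).indicator
            (fun _ => (⨅ m, a (idx m) j / u m) ^ α) ω := by
      funext ω
      rw [Finset.sum_eq_single_of_mem (A ω) (hmemR ω)]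
      · simp [Set.indicator_of_mem, Set.mem_preimage]
      · intro b _ hb
        apply Set.indicator_of_notMem
        simp only [Set.mem_preimage, Set.mem_singleton_iff]
        exact fun h => hb (h ▸ rfl)
    rw [hfun, integral_finset_sum]
    · refine Finset.sum_congr rfl fun a _ => ?_
      rw [integral_indicator_const _ (hAmeas (MeasurableSet.singleton a))]
      simp [smul_eq_mul, measureReal_def]
    · intro a _
      exact (integrable_const _).indicator (hAmeas (MeasurableSet.singleton a))
  have hconst : (∑ a ∈ R, (μ (A ⁻¹' {a})).toReal * ∑ j, K j * (⨅ m, a (idx m) j / u m) ^ α)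
      = ∑ j, K j * ∫ ω, (⨅ m, A ω (idx m) j / u m) ^ α ∂μ := by
    calc (∑ a ∈ R, (μ (A ⁻¹' {a})).toReal * ∑ j, K j * (⨅ m, a (idx m) j / u m) ^ α)
        = ∑ a ∈ R, ∑ j, (μ (A ⁻¹' {a})).toReal * (K j * (⨅ m, a (idx m) j / u m) ^ α) := by
          refine Finset.sum_congr rfl fun a _ => Finset.mul_sum _ _ _
      _ = ∑ j, ∑ a ∈ R, (μ (A ⁻¹' {a})).toReal * (K j * (⨅ m, a (idx m) j / u m) ^ α) :=
          Finset.sum_comm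
      _ = ∑ j, K j * ∫ ω, (⨅ m, A ω (idx m) j / u m) ^ α ∂μ := by
          refine Finset.sum_congr rfl fun j _ => ?_
          rw [hint j, Finset.mul_sum]
          refine Finset.sum_congr rfl fun a _ => by ring
  have hfeq : (fun t : ℝ =>
      t ^ α * (μ {ω | ∀ m, u m * t < ∑ j, A ω (idx m) j * V j ω}).toReal)
      = fun t : ℝ => ∑ a ∈ R, (μ (A ⁻¹' {a})).toReal * (t ^ α * (μ (W ⁻¹' (Wset a t))).toReal) :=
    funext hcomb
  rw [hfeq, ← hconst]
  exact hlim
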